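/- For each fixed k ≥ 0, the probability that a uniformly random derangement of N elements has exactly k 2-cycles converges, as N → ∞, to (1/2)^k * e^{-1/2} / k!, i.e., the number of 2-cycles is asymptotically Poisson distributed with parameter 1/2. -/

import Mathlib

/-- Number of derangements of an `N`-element set. -/
noncomputable def numDerangementsOf (N : ℕ) : ℕ :=
  Nat.card {σ : Equiv.Perm (Fin N) // ∀ i, σ i ≠ i}

/-- Number of derangements of an `N`-element set having exactly `k` 2-cycles. -/
noncomputable def numDerangementsWithPairs (N k : ℕ) : ℕ :=
  Nat.card {σ : Equiv.Perm (Fin N) // (∀ i, σ i ≠ i) ∧ σ.cycleType.count 2 = k}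

open Equiv Equiv.Perm Finset

variable {α : Type*} [Fintype α] [DecidableEq α] {β : Type*} [Fintype β] [DecidableEq β]

noncomputable def fD (α : Type*) [Fintype α] [DecidableEq α] (k : ℕ) : ℕ :=
  Nat.card {σ : Perm α // (∀ i, σ i ≠ i) ∧ σ.cycleType.count 2 = k}


open Equiv Equiv.Perm Finset

variable {α : Type*} [Fintype α] [DecidableEq α] {β : Type*} [Fintype β] [DecidableEq β]

lemma support_cycleOf_pair {σ : Perm α} {a : α} (ha : σ a ≠ a) (h2 : σ (σ a) = a) :
    (σ.cycleOf a).support = {a, σ a} := by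
  have hmem : a ∈ σ.support := mem_support.2 ha
  have h2' : (σ ^ (2 : ℤ)) a = a := by
    rw [zpow_two, mul_apply, h2]
  ext b
  rw [Equiv.Perm.mem_support_cycleOf_iff]
  constructor
  · rintro ⟨⟨i, rfl⟩, -⟩
    have hfix : ∀ q : ℤ, ((σ ^ (2 * q) : Perm α)) a = a := by
      intro q
      rw [zpow_mul]
      exact Equiv.Perm.zpow_apply_eq_self_of_apply_eq_self h2' q
    have : (σ ^ i) a = (σ ^ (i % 2)) a := by
      conv_lhs => rw [show i = i % 2 + 2 * (i / 2) by omega]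
      rw [zpow_add, mul_apply, hfix]
    rw [this]
    rcases Int.emod_two_eq_zero_or_one i with h | h <;> simp [h, Finset.mem_insert]
  · intro hb
    rcases Finset.mem_insert.1 hb with rfl | hb
    · exact ⟨Equiv.Perm.SameCycle.refl σ b, hmem⟩
    · rw [Finset.mem_singleton] at hb
      subst hb
      exact ⟨⟨1, by simp⟩, hmem⟩

lemma card_two_cycle_elts (σ : Perm α) :
    (univ.filter fun a => σ a ≠ a ∧ σ (σ a) = a).card = 2 * σ.cycleType.count 2 := by
  classical
  set F : Finset (Perm α) := σ.cycleFactorsFinset.filter (fun c => c.support.card = 2) with hF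
  have hmemF : ∀ c, c ∈ F ↔ c ∈ σ.cycleFactorsFinset ∧ c.support.card = 2 := by
    intro c; rw [hF, Finset.mem_filter]
  have hset : (univ.filter fun a => σ a ≠ a ∧ σ (σ a) = a) = F.biUnion (fun c => c.support) := by
    ext a
    simp only [Finset.mem_filter, Finset.mem_univ, true_and, Finset.mem_biUnion]
    constructor
    · rintro ⟨ha, h2⟩
      refine ⟨σ.cycleOf a, (hmemF _).2 ⟨Equiv.Perm.cycleOf_mem_cycleFactorsFinset_iff.2 (mem_support.2 ha), ?_⟩, ?_⟩
      · rw [support_cycleOf_pair ha h2, Finset.card_insert_of_notMem (by simp [Ne.symm ha]),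
          Finset.card_singleton]
      · rw [support_cycleOf_pair ha h2]; simp
    · rintro ⟨c, hc, hac⟩
      obtain ⟨hcf, hc2⟩ := (hmemF _).1 hc
      have hcyc : c = σ.cycleOf a := Equiv.Perm.cycle_is_cycleOf hac hcf
      have hσc : ∀ b ∈ c.support, σ b = c b := by
        intro b hb
        rw [hcyc] at hb ⊢
        rw [Equiv.Perm.mem_support_cycleOf_iff] at hb
        rw [Equiv.Perm.cycleOf_apply, if_pos hb.1]
      have haσ : a ∈ σ.support :=
        Equiv.Perm.cycleOf_mem_cycleFactorsFinset_iff.1 (hcyc ▸ hcf)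
      have hca : σ a = c a := hσc a hac
      obtain ⟨x, y, hxy, hswap⟩ := Equiv.Perm.card_support_eq_two.1 hc2
      have hsw2 : c * c = 1 := by rw [hswap]; exact Equiv.swap_mul_self x y
      have hσa_mem : σ a ∈ c.support := by
        rw [hca]; exact Equiv.Perm.apply_mem_support.2 hac
      refine ⟨mem_support.1 haσ, ?_⟩
      have hstep : σ (σ a) = c (c a) := by rw [hσc _ hσa_mem, hca]
      rw [hstep, ← mul_apply, hsw2, one_apply]
  have hcount : σ.cycleType.count 2 = F.card := by
    rw [Equiv.Perm.cycleType_def, Multiset.count_map]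
    have : Multiset.filter (fun a => 2 = (Finset.card ∘ support) a) σ.cycleFactorsFinset.val
        = Multiset.filter (fun c => c.support.card = 2) σ.cycleFactorsFinset.val :=
      Multiset.filter_congr (fun x _ => by simp [eq_comm])
    rw [this, hF, Finset.card_def, Finset.filter_val]
  rw [hset, Finset.card_biUnion, hcount]
  · rw [Finset.sum_congr rfl (fun c hc => (hmemF _).1 hc |>.2), Finset.sum_const, smul_eq_mul,
      mul_comm]
  · intro c hc d hd hcd
    exact Equiv.Perm.Disjoint.disjoint_support
      (σ.cycleFactorsFinset_pairwise_disjoint ((hmemF _).1 hc).1 ((hmemF _).1 hd).1 hcd)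


lemma cycleType_permCongr (e : α ≃ β) (σ : Perm α) :
    (e.permCongr σ).cycleType = σ.cycleType := by
  classical
  have h : e.permCongr σ = σ.extendDomain (e.trans (Equiv.subtypeUnivEquiv (fun _ : β => trivial)).symm) := by
    ext x
    rw [Equiv.Perm.extendDomain_apply_subtype _ _ trivial]
    simp [Equiv.subtypeUnivEquiv]
  rw [h, Equiv.Perm.cycleType_extendDomain]



lemma fD_congr (e : α ≃ β) (k : ℕ) : fD α k = fD β k := by
  apply Nat.card_congr
  refine Equiv.subtypeEquiv (e.permCongr) fun σ => ?_
  rw [cycleType_permCongr]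
  refine and_congr ?_ Iff.rfl
  constructor
  · intro h i
    simpa using fun h' => h (e.symm i) (by simpa using congrArg e.symm h')
  · intro h i hi
    exact h (e i) (by simpa [Equiv.permCongr_apply] using congrArg e hi)

lemma two_mul_count_le (σ : Perm α) : 2 * σ.cycleType.count 2 ≤ Fintype.card α := by
  rw [← card_two_cycle_elts σ]
  exact (Finset.card_filter_le _ _).trans (by simp)

lemma fD_eq_card (k : ℕ) :
    fD α k = (univ.filter fun σ : Perm α => (∀ i, σ i ≠ i) ∧ σ.cycleType.count 2 = k).card := by
  rw [fD, Nat.card_eq_fintype_card, Fintype.card_subtype]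

lemma fD_eq_zero {k : ℕ} (h : Fintype.card α < 2 * k) : fD α k = 0 := by
  rw [fD_eq_card, Finset.card_eq_zero, Finset.filter_eq_empty_iff]
  rintro σ - ⟨-, hk⟩
  exact absurd (hk ▸ two_mul_count_le σ) (by omega)

lemma derangements_partition :
    (univ.filter fun σ : Perm α => ∀ i, σ i ≠ i).card
      = ∑ k ∈ Finset.range (Fintype.card α + 1), fD α k := by
  rw [Finset.card_eq_sum_card_fiberwise
    (f := fun σ : Perm α => σ.cycleType.count 2) (t := Finset.range (Fintype.card α + 1))
    (fun σ _ => Finset.mem_range.2 (show σ.cycleType.count 2 < _ by have := two_mul_count_le σ; omega))]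
  refine Finset.sum_congr rfl fun k _ => ?_
  rw [fD_eq_card]
  congr 1
  rw [Finset.filter_filter]


lemma count2_mul_swap {τ : Perm α} {a b : α} (hab : a ≠ b) (ha : τ a = a) (hb : τ b = b) :
    (τ * Equiv.swap a b).cycleType.count 2 = τ.cycleType.count 2 + 1 := by
  have hdisj : Equiv.Perm.Disjoint τ (Equiv.swap a b) := by
    intro x
    by_cases hxa : x = a
    · exact Or.inl (hxa ▸ ha)
    by_cases hxb : x = b
    · exact Or.inl (hxb ▸ hb)
    · exact Or.inr (Equiv.swap_apply_of_ne_of_ne hxa hxb)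
  rw [Equiv.Perm.Disjoint.cycleType_mul hdisj, (isCycle_swap hab).cycleType,
    Equiv.Perm.card_support_swap hab]
  simp

lemma pair_filter_card {a b : α} (k : ℕ) (hab : a ≠ b) :
    (univ.filter fun σ : Perm α =>
        (∀ i, σ i ≠ i) ∧ σ.cycleType.count 2 = k + 1 ∧ σ a = b ∧ σ b = a).card
    = (univ.filter fun τ : Perm α =>
        τ a = a ∧ τ b = b ∧ (∀ x, x ≠ a → x ≠ b → τ x ≠ x) ∧ τ.cycleType.count 2 = k).card := by
  refine Finset.card_bij' (fun σ _ => σ * Equiv.swap a b) (fun τ _ => τ * Equiv.swap a b)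
    ?_ ?_ ?_ ?_
  · intro σ hσ
    obtain ⟨-, hd, hk, hsa, hsb⟩ := Finset.mem_filter.1 hσ
    have ha' : (σ * Equiv.swap a b) a = a := by simp [mul_apply, hsb]
    have hb' : (σ * Equiv.swap a b) b = b := by simp [mul_apply, hsa]
    refine Finset.mem_filter.2 ⟨Finset.mem_univ _, ha', hb', ?_, ?_⟩
    · intro x hxa hxb
      simpa [mul_apply, Equiv.swap_apply_of_ne_of_ne hxa hxb] using hd x
    · have : (σ * Equiv.swap a b) * Equiv.swap a b = σ := by
        rw [mul_assoc, Equiv.swap_mul_self, mul_one]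
      have hcount := count2_mul_swap hab ha' hb'
      rw [this, hk] at hcount
      show (σ * Equiv.swap a b).cycleType.count 2 = k
      omega
  · intro τ hτ
    obtain ⟨-, ha, hb, hd, hk⟩ := Finset.mem_filter.1 hτ
    have hsa : (τ * Equiv.swap a b) a = b := by simp [mul_apply, hb]
    have hsb : (τ * Equiv.swap a b) b = a := by simp [mul_apply, ha]
    refine Finset.mem_filter.2 ⟨Finset.mem_univ _, ?_, ?_, hsa, hsb⟩
    · intro x
      by_cases hxa : x = a
      · subst hxa; rw [hsa]; exact Ne.symm hab
      by_cases hxb : x = b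
      · subst hxb; rw [hsb]; exact hab
      · simpa [mul_apply, Equiv.swap_apply_of_ne_of_ne hxa hxb] using hd x hxa hxb
    · rw [count2_mul_swap hab ha hb, hk]
  · intro σ _; simp only [mul_assoc, Equiv.swap_mul_self, mul_one]
  · intro τ _; simp only [mul_assoc, Equiv.swap_mul_self, mul_one]

lemma fixed_filter_card {a b : α} (k : ℕ) (hab : a ≠ b) :
    (univ.filter fun τ : Perm α =>
        τ a = a ∧ τ b = b ∧ (∀ x, x ≠ a → x ≠ b → τ x ≠ x) ∧ τ.cycleType.count 2 = k).card
    = fD {x : α // x ≠ a ∧ x ≠ b} k := by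
  rw [fD_eq_card]
  refine Finset.card_bij'
    (fun τ hτ => τ.subtypePerm (p := fun x => x ≠ a ∧ x ≠ b) ?_)
    (fun ρ _ => Equiv.Perm.ofSubtype ρ) ?_ ?_ ?_ ?_
  · -- the subtypePerm hypothesis
    obtain ⟨-, ha, hb, -, -⟩ := Finset.mem_filter.1 hτ
    intro x
    rw [iff_comm]
    constructor
    · rintro ⟨hxa, hxb⟩
      exact ⟨fun h => hxa (τ.injective (h.trans ha.symm)),
             fun h => hxb (τ.injective (h.trans hb.symm))⟩
    · rintro ⟨hxa, hxb⟩
      constructor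
      · rintro rfl; exact hxa ha
      · rintro rfl; exact hxb hb
  · intro τ hτ
    obtain ⟨-, ha, hb, hd, hk⟩ := Finset.mem_filter.1 hτ
    refine Finset.mem_filter.2 ⟨Finset.mem_univ _, ?_, ?_⟩
    · rintro ⟨x, hxa, hxb⟩ hcon
      exact hd x hxa hxb (congrArg Subtype.val hcon)
    · have hfix : ∀ x, τ x ≠ x → (x ≠ a ∧ x ≠ b) := by
        intro x hx
        constructor
        · rintro rfl; exact hx ha
        · rintro rfl; exact hx hb
      rw [← Equiv.Perm.cycleType_ofSubtype, Equiv.Perm.ofSubtype_subtypePerm _ hfix]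
      exact hk
  · intro ρ hρ
    obtain ⟨-, hd, hk⟩ := Finset.mem_filter.1 hρ
    refine Finset.mem_filter.2 ⟨Finset.mem_univ _, ?_, ?_, ?_, ?_⟩
    · exact Equiv.Perm.ofSubtype_apply_of_not_mem ρ (by simp)
    · exact Equiv.Perm.ofSubtype_apply_of_not_mem ρ (by simp [Ne.symm hab])
    · intro x hxa hxb hcon
      rw [Equiv.Perm.ofSubtype_apply_of_mem ρ ⟨hxa, hxb⟩] at hcon
      exact hd ⟨x, hxa, hxb⟩ (Subtype.ext hcon)
    · rw [Equiv.Perm.cycleType_ofSubtype]; exact hk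
  · intro τ hτ
    obtain ⟨-, ha, hb, -, -⟩ := Finset.mem_filter.1 hτ
    apply Equiv.Perm.ofSubtype_subtypePerm
    intro x hx
    constructor
    · rintro rfl; exact hx ha
    · rintro rfl; exact hx hb
  · intro ρ _
    exact Equiv.Perm.subtypePerm_ofSubtype ρ

lemma card_subtype_ne_ne {a b : α} (hab : a ≠ b) :
    Fintype.card {x : α // x ≠ a ∧ x ≠ b} = Fintype.card α - 2 := by
  rw [Fintype.card_subtype]
  have h : (univ.filter fun x : α => x ≠ a ∧ x ≠ b) = univ \ {a, b} := by
    ext x; simp [not_or]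
  rw [h, Finset.card_sdiff_of_subset (Finset.subset_univ _), Finset.card_univ,
    Finset.card_insert_of_notMem (by simp [hab]), Finset.card_singleton]

lemma fD_rec (k : ℕ) :
    2 * (k + 1) * fD α (k + 1)
      = (Fintype.card α * Fintype.card α - Fintype.card α)
          * fD (Fin (Fintype.card α - 2)) k := by
  classical
  set Sfin := univ.filter fun σ : Perm α =>
    (∀ i, σ i ≠ i) ∧ σ.cycleType.count 2 = k + 1 with hSfin
  set E := univ.filter fun p : Perm α × α =>
    ((∀ i, p.1 i ≠ i) ∧ p.1.cycleType.count 2 = k + 1) ∧ p.1 (p.1 p.2) = p.2 with hE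
  have h1 : E.card = Sfin.card * (2 * (k + 1)) := by
    rw [Finset.card_eq_sum_card_fiberwise (f := Prod.fst) (t := Sfin)
      (fun p hp => by
        obtain ⟨-, hgood, -⟩ := Finset.mem_filter.1 hp
        exact Finset.mem_filter.2 ⟨Finset.mem_univ _, hgood⟩)]
    have hfib : ∀ σ ∈ Sfin, (E.filter fun x => x.1 = σ).card = 2 * (k + 1) := by
      intro σ hσ
      obtain ⟨-, hd, hk⟩ := Finset.mem_filter.1 hσ
      have hcard : (E.filter fun x => x.1 = σ).card
          = (univ.filter fun a : α => σ (σ a) = a).card := by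
        refine Finset.card_bij' (fun x _ => x.2) (fun a _ => (σ, a)) ?_ ?_ ?_ ?_
        · intro x hx
          obtain ⟨hxE, hx1⟩ := Finset.mem_filter.1 hx
          obtain ⟨-, -, h2⟩ := Finset.mem_filter.1 hxE
          subst hx1
          exact Finset.mem_filter.2 ⟨Finset.mem_univ _, h2⟩
        · intro a ha
          obtain ⟨-, h2⟩ := Finset.mem_filter.1 ha
          exact Finset.mem_filter.2
            ⟨Finset.mem_filter.2 ⟨Finset.mem_univ _, ⟨hd, hk⟩, h2⟩, rfl⟩
        · intro x hx
          obtain ⟨-, hx1⟩ := Finset.mem_filter.1 hx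
          exact Prod.ext hx1.symm rfl
        · intro a _; rfl
      rw [hcard]
      have hfe : (univ.filter fun a : α => σ (σ a) = a)
          = (univ.filter fun a => σ a ≠ a ∧ σ (σ a) = a) := by
        ext a; simp [hd a]
      rw [hfe, card_two_cycle_elts, hk]
    rw [Finset.sum_congr rfl hfib, Finset.sum_const, smul_eq_mul]
  set E2 := univ.filter fun q : (α × α) × Perm α =>
    q.1.1 ≠ q.1.2 ∧ (∀ i, q.2 i ≠ i) ∧ q.2.cycleType.count 2 = k + 1 ∧
      q.2 q.1.1 = q.1.2 ∧ q.2 q.1.2 = q.1.1 with hE2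
  have h2 : E.card = E2.card := by
    refine Finset.card_bij' (fun x _ => ((x.2, x.1 x.2), x.1)) (fun q _ => (q.2, q.1.1))
      ?_ ?_ ?_ ?_
    · intro x hx
      obtain ⟨-, ⟨hd, hk⟩, h2⟩ := Finset.mem_filter.1 hx
      exact Finset.mem_filter.2
        ⟨Finset.mem_univ _, fun h => hd x.2 h.symm, hd, hk, rfl, h2⟩
    · intro q hq
      obtain ⟨-, -, hd, hk, h1', h2'⟩ := Finset.mem_filter.1 hq
      refine Finset.mem_filter.2 ⟨Finset.mem_univ _, ⟨hd, hk⟩, ?_⟩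
      rw [h1', h2']
    · intro x _; rfl
    · intro q hq
      obtain ⟨-, -, -, -, h1', -⟩ := Finset.mem_filter.1 hq
      show ((q.1.1, q.2 q.1.1), q.2) = q
      rw [h1']
  have h3 : E2.card = (Fintype.card α * Fintype.card α - Fintype.card α)
      * fD (Fin (Fintype.card α - 2)) k := by
    rw [Finset.card_eq_sum_card_fiberwise (f := Prod.fst) (t := (univ : Finset α).offDiag)
      (fun q hq => by
        obtain ⟨-, hne, -⟩ := Finset.mem_filter.1 hq
        exact Finset.mem_offDiag.2 ⟨Finset.mem_univ _, Finset.mem_univ _, hne⟩)]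
    have hfib : ∀ p ∈ (univ : Finset α).offDiag,
        (E2.filter fun q => q.1 = p).card = fD (Fin (Fintype.card α - 2)) k := by
      intro p hp
      obtain ⟨-, -, hne⟩ := Finset.mem_offDiag.1 hp
      have hcard : (E2.filter fun q => q.1 = p).card
          = (univ.filter fun σ : Perm α =>
              (∀ i, σ i ≠ i) ∧ σ.cycleType.count 2 = k + 1 ∧ σ p.1 = p.2 ∧ σ p.2 = p.1).card := by
        refine Finset.card_bij' (fun q _ => q.2) (fun σ _ => (p, σ)) ?_ ?_ ?_ ?_
        · intro q hq
          obtain ⟨hqE, hq1⟩ := Finset.mem_filter.1 hq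
          obtain ⟨-, -, hd, hk, ha, hb⟩ := Finset.mem_filter.1 hqE
          subst hq1
          exact Finset.mem_filter.2 ⟨Finset.mem_univ _, hd, hk, ha, hb⟩
        · intro σ hσ
          obtain ⟨-, hd, hk, ha, hb⟩ := Finset.mem_filter.1 hσ
          exact Finset.mem_filter.2
            ⟨Finset.mem_filter.2 ⟨Finset.mem_univ _, hne, hd, hk, ha, hb⟩, rfl⟩
        · intro q hq
          obtain ⟨-, hq1⟩ := Finset.mem_filter.1 hq
          exact Prod.ext hq1.symm rfl
        · intro σ _; rfl
      rw [hcard, pair_filter_card k hne, fixed_filter_card k hne,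
        fD_congr (Fintype.equivFinOfCardEq (card_subtype_ne_ne hne)) k]
    rw [Finset.sum_congr rfl hfib, Finset.sum_const, smul_eq_mul, Finset.offDiag_card,
      Finset.card_univ]
  rw [fD_eq_card, ← hSfin]
  calc 2 * (k + 1) * Sfin.card = Sfin.card * (2 * (k + 1)) := by ring
    _ = E.card := h1.symm
    _ = E2.card := h2
    _ = _ := h3


lemma fD_closed : ∀ (k N : ℕ), 2 * k ≤ N →
    2 ^ k * k.factorial * fD (Fin N) k
      = N.descFactorial (2 * k) * fD (Fin (N - 2 * k)) 0 := by
  intro k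
  induction k with
  | zero => intro N _; simp
  | succ k ih =>
    intro N hN
    obtain ⟨M, rfl⟩ : ∃ M, N = M + 2 := ⟨N - 2, by omega⟩
    have hrec := fD_rec (α := Fin (M + 2)) k
    rw [Fintype.card_fin] at hrec
    have h2 : M + 2 - 2 = M := by omega
    rw [h2] at hrec
    have hM : 2 * k ≤ M := by omega
    have hdf : (M + 2).descFactorial (2 * (k + 1)) = (M + 2) * (M + 1) * M.descFactorial (2 * k) := by
      have : 2 * (k + 1) = (2 * k + 1) + 1 := by ring
      rw [this, Nat.succ_descFactorial_succ, Nat.succ_descFactorial_succ, ← mul_assoc]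
    have hsub : M + 2 - 2 * (k + 1) = M - 2 * k := by omega
    calc 2 ^ (k + 1) * (k + 1).factorial * fD (Fin (M + 2)) (k + 1)
        = 2 ^ k * k.factorial * (2 * (k + 1) * fD (Fin (M + 2)) (k + 1)) := by
          rw [Nat.factorial_succ]; ring
      _ = 2 ^ k * k.factorial * (((M + 2) * (M + 2) - (M + 2)) * fD (Fin M) k) := by rw [hrec]
      _ = ((M + 2) * (M + 1)) * (2 ^ k * k.factorial * fD (Fin M) k) := by
          have : (M + 2) * (M + 2) - (M + 2) = (M + 2) * (M + 1) := by
            have := Nat.mul_sub_one (M + 2) (M+2)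
            ring_nf
            omega
          rw [this]; ring
      _ = ((M + 2) * (M + 1)) * (M.descFactorial (2 * k) * fD (Fin (M - 2 * k)) 0) := by
          rw [ih M hM]
      _ = (M + 2).descFactorial (2 * (k + 1)) * fD (Fin (M + 2 - 2 * (k + 1))) 0 := by
          rw [hdf, hsub]; ring


lemma fD_zero {N k : ℕ} (h : N < 2 * k) : fD (Fin N) k = 0 :=
  fD_eq_zero (by simpa using h)

lemma numDerangementsOf_eq (N : ℕ) : numDerangementsOf N = numDerangements N := by
  rw [numDerangementsOf, Nat.card_eq_fintype_card, ← card_derangements_fin_eq_numDerangements]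
  exact Fintype.card_congr (Equiv.subtypeEquivRight (fun σ => Iff.rfl))

lemma partitionD (N : ℕ) :
    numDerangements N = ∑ k ∈ Finset.range (N + 1), fD (Fin N) k := by
  rw [← numDerangementsOf_eq, numDerangementsOf, Nat.card_eq_fintype_card, Fintype.card_subtype]
  have h := derangements_partition (α := Fin N)
  rw [Fintype.card_fin] at h
  convert h using 2
  ext σ
  simp [Finset.mem_filter]

noncomputable def dd (n : ℕ) : ℝ := (numDerangements n : ℝ) / n.factorial
noncomputable def aa (n : ℕ) : ℝ := (fD (Fin n) 0 : ℝ) / n.factorial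
noncomputable def bb (m : ℕ) : ℝ :=
  ∑ j ∈ Finset.range (m / 2 + 1), ((-1) ^ j / (2 ^ j * j.factorial)) * dd (m - 2 * j)

lemma term_eq {k N : ℕ} (h : 2 * k ≤ N) :
    (fD (Fin N) k : ℝ) / N.factorial
      = (1 / (2 ^ k * k.factorial)) * aa (N - 2 * k) := by
  have hfac : ((N - 2 * k).factorial * N.descFactorial (2 * k) : ℕ) = N.factorial :=
    Nat.factorial_mul_descFactorial h
  have hc := fD_closed k N h
  have hc' : (2 : ℝ) ^ k * k.factorial * fD (Fin N) k
      = N.descFactorial (2 * k) * fD (Fin (N - 2 * k)) 0 := by exact_mod_cast hc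
  have hfac' : ((N - 2 * k).factorial : ℝ) * N.descFactorial (2 * k) = N.factorial := by
    exact_mod_cast hfac
  rw [aa]
  have h1 : (N.factorial : ℝ) ≠ 0 := Nat.cast_ne_zero.2 (Nat.factorial_ne_zero N)
  have h2 : ((N - 2 * k).factorial : ℝ) ≠ 0 := Nat.cast_ne_zero.2 (Nat.factorial_ne_zero _)
  have h3 : (2 : ℝ) ^ k ≠ 0 := by positivity
  have h4 : (k.factorial : ℝ) ≠ 0 := Nat.cast_ne_zero.2 (Nat.factorial_ne_zero k)
  field_simp
  linear_combination ((N - 2 * k).factorial : ℝ) * hc'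
    + (fD (Fin (N - 2 * k)) 0 : ℝ) * hfac'

lemma dd_eq (N : ℕ) :
    dd N = ∑ j ∈ Finset.range (N / 2 + 1),
      (1 / (2 ^ j * j.factorial)) * aa (N - 2 * j) := by
  rw [dd, partitionD, Nat.cast_sum, Finset.sum_div]
  rw [← Finset.sum_subset (Finset.range_subset_range.2 (by omega : N / 2 + 1 ≤ N + 1))
    (fun x hx hnx => by
      have h1 := Finset.mem_range.1 hx
      have h2 : ¬ (x < N / 2 + 1) := fun h => hnx (Finset.mem_range.2 h)
      rw [fD_zero (by omega : N < 2 * x)]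
      simp)]
  exact Finset.sum_congr rfl fun j hj =>
    term_eq (by have := Finset.mem_range.1 hj; omega)

lemma coeff_sum (t : ℕ) :
    ∑ j ∈ Finset.range (t + 1),
        (1 / (2 ^ j * (j.factorial : ℝ))) * ((-1) ^ (t - j) / (2 ^ (t - j) * (t - j).factorial))
      = if t = 0 then 1 else 0 := by
  have hterm : ∀ j ∈ Finset.range (t + 1),
      (1 / (2 ^ j * (j.factorial : ℝ))) * ((-1) ^ (t - j) / (2 ^ (t - j) * (t - j).factorial))
        = ((-1) ^ (t - j) * (t.choose j)) / (2 ^ t * t.factorial) := by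
    intro j hj
    have hjt : j ≤ t := by have := Finset.mem_range.1 hj; omega
    have hch : (t.choose j * (j.factorial * (t - j).factorial) : ℕ) = t.factorial := by
      rw [← mul_assoc]; exact Nat.choose_mul_factorial_mul_factorial hjt
    have hch' : ((t.choose j : ℝ) * (j.factorial * (t - j).factorial)) = t.factorial := by
      exact_mod_cast hch
    have hp : (2 : ℝ) ^ j * 2 ^ (t - j) = 2 ^ t := by
      rw [← pow_add]; congr 1; omega
    have h2 : (j.factorial : ℝ) ≠ 0 := Nat.cast_ne_zero.2 (Nat.factorial_ne_zero _)
    have h3 : ((t - j).factorial : ℝ) ≠ 0 := Nat.cast_ne_zero.2 (Nat.factorial_ne_zero _)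
    have h4 : (t.factorial : ℝ) ≠ 0 := Nat.cast_ne_zero.2 (Nat.factorial_ne_zero _)
    field_simp
    linear_combination (-((2 : ℝ) ^ (t - j) * 2 ^ j)) * hch'
      + (-(t.factorial : ℝ)) * hp
  rw [Finset.sum_congr rfl hterm, ← Finset.sum_div]
  have hrefl : ∑ j ∈ Finset.range (t + 1), ((-1 : ℝ) ^ (t - j) * (t.choose j))
      = ∑ i ∈ Finset.range (t + 1), ((-1 : ℝ) ^ i * (t.choose i)) := by
    have hstep : ∀ j ∈ Finset.range (t + 1),
        ((-1 : ℝ) ^ (t - j) * (t.choose j))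
          = (fun i => ((-1 : ℝ) ^ i * (t.choose (t - i)))) (t - j) := by
      intro j hj
      have hjt : j ≤ t := by have := Finset.mem_range.1 hj; omega
      simp only []
      rw [Nat.sub_sub_self hjt]
    rw [Finset.sum_congr rfl hstep]
    have := Finset.sum_range_reflect (fun i => ((-1 : ℝ) ^ i * (t.choose (t - i)))) (t + 1)
    simp only [Nat.add_sub_cancel] at this
    rw [this]
    refine Finset.sum_congr rfl fun i hi => ?_
    have hit : i ≤ t := by have := Finset.mem_range.1 hi; omega
    rw [Nat.choose_symm hit]
  rw [hrefl]
  have hint : ∑ i ∈ Finset.range (t + 1), ((-1 : ℝ) ^ i * (t.choose i))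
      = if t = 0 then 1 else 0 := by
    have := Int.alternating_sum_range_choose (n := t)
    have hcast : ((∑ i ∈ Finset.range (t + 1), ((-1 : ℤ) ^ i * (t.choose i)) : ℤ) : ℝ)
        = ∑ i ∈ Finset.range (t + 1), ((-1 : ℝ) ^ i * (t.choose i)) := by
      push_cast; rfl
    rw [← hcast, this]
    split <;> simp
  rw [hint]
  by_cases ht : t = 0
  · subst ht; norm_num
  · simp [ht]

lemma key_id (m : ℕ) :
    ∑ j ∈ Finset.range (m / 2 + 1), (1 / (2 ^ j * (j.factorial : ℝ))) * bb (m - 2 * j)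
      = dd m := by
  have hinner : ∀ j ∈ Finset.range (m / 2 + 1),
      (1 / (2 ^ j * (j.factorial : ℝ))) * bb (m - 2 * j)
        = ∑ i ∈ Finset.range (m / 2 - j + 1),
            (1 / (2 ^ j * (j.factorial : ℝ)))
              * (((-1) ^ i / (2 ^ i * (i.factorial : ℝ))) * dd (m - 2 * (j + i))) := by
    intro j hj
    have hjK : j ≤ m / 2 := by have := Finset.mem_range.1 hj; omega
    rw [bb]
    have hdiv : (m - 2 * j) / 2 = m / 2 - j := by omega
    rw [hdiv, Finset.mul_sum]
    refine Finset.sum_congr rfl fun i hi => ?_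
    have h' : m - 2 * j - 2 * i = m - 2 * (j + i) := by omega
    rw [h']
  rw [Finset.sum_congr rfl hinner, Finset.sum_sigma']
  rw [Finset.sum_nbij' (i := fun p => (⟨p.1 + p.2, p.1⟩ : Σ _ : ℕ, ℕ))
    (j := fun q => (⟨q.2, q.1 - q.2⟩ : Σ _ : ℕ, ℕ))
    (g := fun q => (1 / (2 ^ q.2 * (q.2.factorial : ℝ)))
        * (((-1) ^ (q.1 - q.2) / (2 ^ (q.1 - q.2) * ((q.1 - q.2).factorial : ℝ)))
            * dd (m - 2 * q.1)))
    (t := (Finset.range (m / 2 + 1)).sigma fun t => Finset.range (t + 1))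
    ?_ ?_ ?_ ?_ ?_]
  · rw [Finset.sum_sigma]
    have hout : ∀ t ∈ Finset.range (m / 2 + 1),
        (∑ s ∈ Finset.range (t + 1),
          (1 / (2 ^ s * (s.factorial : ℝ)))
            * (((-1) ^ (t - s) / (2 ^ (t - s) * ((t - s).factorial : ℝ))) * dd (m - 2 * t)))
          = if t = 0 then dd (m - 2 * t) else 0 := by
      intro t _
      have : ∀ s ∈ Finset.range (t + 1),
          (1 / (2 ^ s * (s.factorial : ℝ)))
            * (((-1) ^ (t - s) / (2 ^ (t - s) * ((t - s).factorial : ℝ))) * dd (m - 2 * t))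
          = ((1 / (2 ^ s * (s.factorial : ℝ)))
              * ((-1) ^ (t - s) / (2 ^ (t - s) * ((t - s).factorial : ℝ)))) * dd (m - 2 * t) := by
        intro s _; ring
      rw [Finset.sum_congr rfl this, ← Finset.sum_mul, coeff_sum]
      split <;> simp
    rw [Finset.sum_congr rfl hout, Finset.sum_ite_eq' (Finset.range (m / 2 + 1)) 0]
    simp
  · rintro ⟨j, i⟩ hp
    simp only [Finset.mem_sigma, Finset.mem_range] at hp ⊢
    omega
  · rintro ⟨t, s⟩ hq
    simp only [Finset.mem_sigma, Finset.mem_range] at hq ⊢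
    omega
  · rintro ⟨j, i⟩ hp
    simp
  · rintro ⟨t, s⟩ hq
    simp only [Finset.mem_sigma, Finset.mem_range] at hq
    simp
    omega
  · rintro ⟨j, i⟩ hp
    simp

lemma aa_eq_bb : ∀ m, aa m = bb m := by
  intro m
  induction m using Nat.strong_induction_on with
  | _ m ih =>
    have h1 := dd_eq m
    have h2 := key_id m
    rw [Finset.sum_range_succ'] at h1 h2
    have hrw : ∀ j ∈ Finset.range (m / 2),
        (1 / (2 ^ (j + 1) * ((j + 1).factorial : ℝ))) * aa (m - 2 * (j + 1))
          = (1 / (2 ^ (j + 1) * ((j + 1).factorial : ℝ))) * bb (m - 2 * (j + 1)) := by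
      intro j hj
      have hj' := Finset.mem_range.1 hj
      rw [ih (m - 2 * (j + 1)) (by omega)]
    rw [Finset.sum_congr rfl hrw] at h1
    have e1 : (1 / ((2:ℝ) ^ 0 * ((0:ℕ).factorial : ℝ))) = 1 := by norm_num
    simp only [pow_zero, Nat.factorial_zero, Nat.cast_one, mul_one, Nat.mul_zero, Nat.sub_zero,
      one_div, inv_one, one_mul, mul_zero] at h1 h2
    linarith

lemma tendsto_dd : Filter.Tendsto dd Filter.atTop (nhds (Real.exp (-1))) :=
  numDerangements_tendsto_inv_e

lemma abs_dd_le_one (n : ℕ) : |dd n| ≤ 1 := by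
  have h1 : (0 : ℝ) ≤ dd n := by
    rw [dd]; positivity
  have h2 : dd n ≤ 1 := by
    rw [dd, div_le_one (by exact_mod_cast Nat.factorial_pos n)]
    have : numDerangements n = Fintype.card (derangements (Fin n)) :=
      card_derangements_fin_eq_numDerangements.symm
    rw [this]
    have hle : Fintype.card (derangements (Fin n)) ≤ Fintype.card (Equiv.Perm (Fin n)) :=
      Fintype.card_le_of_injective Subtype.val Subtype.val_injective
    calc (Fintype.card (derangements (Fin n)) : ℝ) ≤ Fintype.card (Equiv.Perm (Fin n)) := by
          exact_mod_cast hle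
      _ = (n.factorial : ℝ) := by rw [Fintype.card_perm, Fintype.card_fin]
  rw [abs_of_nonneg h1]; exact h2

lemma bb_tendsto :
    Filter.Tendsto bb Filter.atTop (nhds (Real.exp (-(1/2)) * Real.exp (-1))) := by
  classical
  set u : ℕ → ℝ := fun j => (-(1/2) : ℝ) ^ j / j.factorial with hu_def
  have hu : HasSum u (Real.exp (-(1/2))) := by
    rw [Real.exp_eq_exp_ℝ]
    exact NormedSpace.expSeries_div_hasSum_exp (-(1/2) : ℝ)
  have hu_eq : ∀ j, u j = (-1) ^ j / (2 ^ j * (j.factorial : ℝ)) := by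
    intro j
    simp only [hu_def]
    rw [show (-(1/2) : ℝ) = (-1) / 2 by norm_num, div_pow]
    ring
  set f : ℕ → ℕ → ℝ := fun m j => if j ≤ m / 2 then u j * dd (m - 2 * j) else 0 with hf_def
  have hbb : ∀ m, bb m = ∑' j, f m j := by
    intro m
    rw [tsum_eq_sum (s := Finset.range (m / 2 + 1))
      (by
        intro j hj
        have : ¬ j ≤ m / 2 := fun h => hj (Finset.mem_range.2 (by omega))
        simp [hf_def, this])]
    refine (Finset.sum_congr rfl fun j hj => ?_)
    have hj' : j ≤ m / 2 := by have := Finset.mem_range.1 hj; omega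
    simp only [hf_def, if_pos hj', hu_eq]
  have hsummable : Summable (fun j => |u j|) := by
    refine Summable.congr (((NormedSpace.expSeries_div_hasSum_exp ((1/2) : ℝ))).summable) ?_
    intro j
    simp only [hu_def]
    rw [abs_div, abs_pow, abs_neg, abs_of_nonneg (by norm_num : (0:ℝ) ≤ 1/2),
      abs_of_nonneg (Nat.cast_nonneg _)]
  have htend : Filter.Tendsto (fun m => ∑' j, f m j) Filter.atTop
      (nhds (∑' j, u j * Real.exp (-1))) := by
    refine tendsto_tsum_of_dominated_convergence (bound := fun j => |u j|) hsummable ?_ ?_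
    · intro j
      have h1 : Filter.Tendsto (fun m : ℕ => u j * dd (m - 2 * j)) Filter.atTop
          (nhds (u j * Real.exp (-1))) :=
        (tendsto_dd.comp (Filter.tendsto_sub_atTop_nat (2 * j))).const_mul (u j)
      refine h1.congr' ?_
      filter_upwards [Filter.eventually_ge_atTop (2 * j)] with m hm
      have : j ≤ m / 2 := by omega
      simp [hf_def, this]
    · filter_upwards with m
      intro j
      by_cases h : j ≤ m / 2
      · simp only [hf_def, if_pos h, Real.norm_eq_abs, abs_mul]
        calc |u j| * |dd (m - 2 * j)| ≤ |u j| * 1 :=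
            mul_le_mul_of_nonneg_left (abs_dd_le_one _) (abs_nonneg _)
          _ = |u j| := mul_one _
      · simp [hf_def, h]
  have htsum : (∑' j, u j * Real.exp (-1)) = Real.exp (-(1/2)) * Real.exp (-1) := by
    rw [tsum_mul_right, hu.tsum_eq]
  rw [← htsum]
  exact Filter.Tendsto.congr (fun m => (hbb m).symm) htend

lemma aa_tendsto :
    Filter.Tendsto aa Filter.atTop (nhds (Real.exp (-(1/2)) * Real.exp (-1))) := by
  have : aa = bb := funext aa_eq_bb
  rw [this]; exact bb_tendsto


theorem prob_exactly_k_pairs_tendsto (k : ℕ) :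
    Filter.Tendsto
      (fun N : ℕ =>
        (numDerangementsWithPairs N k : ℝ) / (numDerangementsOf N : ℝ))
      Filter.atTop
      (nhds ((1 / 2) ^ k * Real.exp (-(1 / 2)) / Nat.factorial k)) := by
  have hknz : ((k.factorial : ℝ)) ≠ 0 := Nat.cast_ne_zero.2 (Nat.factorial_ne_zero k)
  have h2k : ((2 : ℝ) ^ k) ≠ 0 := by positivity
  have hexp : Real.exp (-1) ≠ 0 := (Real.exp_pos _).ne'
  have hnum : Filter.Tendsto
      (fun N : ℕ => (1 / (2 ^ k * (k.factorial : ℝ))) * aa (N - 2 * k))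
      Filter.atTop (nhds ((1 / (2 ^ k * (k.factorial : ℝ))) * (Real.exp (-(1/2)) * Real.exp (-1)))) :=
    (aa_tendsto.comp (Filter.tendsto_sub_atTop_nat (2 * k))).const_mul _
  have hg : Filter.Tendsto
      (fun N : ℕ => ((1 / (2 ^ k * (k.factorial : ℝ))) * aa (N - 2 * k)) / dd N)
      Filter.atTop
      (nhds (((1 / (2 ^ k * (k.factorial : ℝ))) * (Real.exp (-(1/2)) * Real.exp (-1))) / Real.exp (-1))) :=
    hnum.div tendsto_dd hexp
  have hlim : ((1 / (2 ^ k * (k.factorial : ℝ))) * (Real.exp (-(1/2)) * Real.exp (-1))) / Real.exp (-1)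
      = (1 / 2) ^ k * Real.exp (-(1 / 2)) / Nat.factorial k := by
    field_simp
    rw [← mul_pow]; norm_num
  rw [← hlim]
  refine Filter.Tendsto.congr' ?_ hg
  have hev1 := Filter.eventually_ge_atTop (2 * k)
  have hev2 := tendsto_dd.eventually (eventually_gt_nhds (Real.exp_pos (-1)))
  filter_upwards [hev1, hev2] with N hN hpos
  have hterm := term_eq (k := k) (N := N) hN
  have hDne : (numDerangements N : ℝ) ≠ 0 := by
    intro h0
    rw [dd, h0] at hpos
    simp at hpos
  have hfacne : ((N.factorial : ℝ)) ≠ 0 := Nat.cast_ne_zero.2 (Nat.factorial_ne_zero N)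
  rw [← hterm, dd, numDerangementsWithPairs, numDerangementsOf_eq]
  show (fD (Fin N) k : ℝ) / N.factorial / ((numDerangements N : ℝ) / N.factorial)
      = (fD (Fin N) k : ℝ) / (numDerangements N : ℝ)
  field_simp
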